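/- If Σ_{k=1}^{I} θ(k)_{0−} = n, then the market clears at every time: Σ_{k=1}^{I} θ(k)(t) = n for all t ∈ [0,T]. -/
import Mathlib


open MeasureTheory

/-- `a_Σ^{≥j} = Σ_{k=j}^{I} a(k)`. -/
noncomputable def aSig (I : ℕ) (a : ℕ → ℝ) (j : ℕ) : ℝ :=
  ∑ k ∈ Finset.Icc j I, a k

/-- `A(j) = a(j) − a_Σ^{≥j}/(I−j+1)` for `j ≤ I−1`, and `A(I) = a(I) − a_Σ^{≥I−1}/2`. -/
noncomputable def Acoef (I : ℕ) (a : ℕ → ℝ) (j : ℕ) : ℝ :=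
  if j = I then a I - aSig I a (I - 1) / 2
  else a j - aSig I a j / ((I : ℝ) - (j : ℝ) + 1)

/-- The largest index `j ≤ I−2` with `τ(j) ≤ t` (and `0` if none). -/
noncomputable def lastIdx (I : ℕ) (τ : ℕ → ℝ) (t : ℝ) : ℕ :=
  (Finset.filter (fun j => τ j ≤ t) (Finset.range (I - 1))).sup id

/-- The candidate equilibrium stock price drift `μ`, defined piecewise:
for `t ∈ [τ(j), τ(j+1))` (with `0 ≤ j ≤ I−2` the largest index with `τ(j) ≤ t`),
`μ(t) = −κ(t)·(γ(t)·a_Σ^{≥j+1}/(I−j) + Σ_{k=1}^{j} γ(τ(k))·A(k)/(I−k))`, and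
for `t ∈ [τ(I−1), T]`,
`μ(t) = −κ(t)·(γ(t)·a_Σ^{≥I−1}/2 + Σ_{k=1}^{I−2} γ(τ(k))·A(k)/(I−k))`. -/
noncomputable def muDrift (κ γ : ℝ → ℝ) (I : ℕ) (a : ℕ → ℝ) (τ : ℕ → ℝ) (t : ℝ) : ℝ :=
  if t < τ (I - 1) then
    -(κ t) * (γ t * aSig I a (lastIdx I τ t + 1) / ((I : ℝ) - (lastIdx I τ t : ℝ))
      + ∑ k ∈ Finset.Icc 1 (lastIdx I τ t), γ (τ k) * Acoef I a k / ((I : ℝ) - (k : ℝ)))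
  else
    -(κ t) * (γ t * aSig I a (I - 1) / 2
      + ∑ k ∈ Finset.Icc 1 (I - 2), γ (τ k) * Acoef I a k / ((I : ℝ) - (k : ℝ)))

/-- Agent `(j)`'s candidate optimal trading strategy:
`θ(j)(t) = θ(j)_{0−} + μ(t)/κ(t) + γ(t)·a(j)` for `t ≤ τ(j)`, frozen afterwards. -/
noncomputable def thetaEq (κ γ : ℝ → ℝ) (I : ℕ) (a : ℕ → ℝ) (τ : ℕ → ℝ)
    (θ0 : ℕ → ℝ) (j : ℕ) (t : ℝ) : ℝ :=
  if t ≤ τ j then θ0 j + muDrift κ γ I a τ t / κ t + γ t * a j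
  else θ0 j + muDrift κ γ I a τ (τ j) / κ (τ j) + γ (τ j) * a j

noncomputable def cSum (γ : ℝ → ℝ) (I : ℕ) (a : ℕ → ℝ) (τ : ℕ → ℝ) (j : ℕ) : ℝ :=
  ∑ k ∈ Finset.Icc 1 j, γ (τ k) * Acoef I a k / ((I : ℝ) - (k : ℝ))

noncomputable def Ffun (γ : ℝ → ℝ) (I : ℕ) (a : ℕ → ℝ) (τ : ℕ → ℝ) (j : ℕ) (s : ℝ) : ℝ :=
  -(γ s * aSig I a (j + 1) / ((I : ℝ) - (j : ℝ)) + cSum γ I a τ j)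

lemma aSig_succ (I : ℕ) (a : ℕ → ℝ) (j : ℕ) (hj : j ≤ I) :
    aSig I a j = a j + aSig I a (j + 1) := by
  unfold aSig
  rw [← Finset.Ioc_insert_left hj, Finset.sum_insert (by simp), Finset.Icc_add_one_left_eq_Ioc]

lemma aSig_last (I : ℕ) (a : ℕ → ℝ) : aSig I a I = a I := by
  unfold aSig; simp

lemma cSum_succ (γ : ℝ → ℝ) (I : ℕ) (a : ℕ → ℝ) (τ : ℕ → ℝ) (j : ℕ) :
    cSum γ I a τ (j + 1)
      = cSum γ I a τ j + γ (τ (j + 1)) * Acoef I a (j + 1) / ((I : ℝ) - (j : ℝ) - 1) := by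
  unfold cSum
  rw [Finset.sum_Icc_succ_top (by omega)]
  have : (I : ℝ) - ((j + 1 : ℕ) : ℝ) = (I : ℝ) - (j : ℝ) - 1 := by push_cast; ring
  rw [this]

lemma Ffun_succ (γ : ℝ → ℝ) (I : ℕ) (a : ℕ → ℝ) (τ : ℕ → ℝ) (j : ℕ)
    (hj : j + 1 ≤ I - 1) (hI : 3 ≤ I) (s : ℝ) :
    Ffun γ I a τ (j + 1) s =
      Ffun γ I a τ j s
        - (γ (τ (j + 1)) - γ s) * Acoef I a (j + 1) / ((I : ℝ) - (j : ℝ) - 1) := by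
  have hjI : j + 1 < I := by omega
  have hA : Acoef I a (j + 1) = a (j + 1) - aSig I a (j + 1) / ((I : ℝ) - (j : ℝ)) := by
    rw [Acoef, if_neg (by omega)]
    have : (I : ℝ) - ((j + 1 : ℕ) : ℝ) + 1 = (I : ℝ) - (j : ℝ) := by push_cast; ring
    rw [this]
  have h1 : aSig I a (j + 1) = a (j + 1) + aSig I a (j + 1 + 1) :=
    aSig_succ I a (j + 1) (by omega)
  have hjR : (j : ℝ) + 1 < (I : ℝ) := by exact_mod_cast hjI
  have d1 : (I : ℝ) - (j : ℝ) ≠ 0 := by intro h; linarith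
  have d2 : (I : ℝ) - (j : ℝ) - 1 ≠ 0 := by intro h; linarith
  have e1 : (I : ℝ) - ((j + 1 : ℕ) : ℝ) = (I : ℝ) - (j : ℝ) - 1 := by push_cast; ring
  unfold Ffun
  rw [e1, cSum_succ, hA, h1]
  set x := (I : ℝ) - (j : ℝ) with hx
  set G := γ s
  set G1 := γ (τ (j + 1))
  set A1 := a (j + 1)
  set S2 := aSig I a (j + 1 + 1)
  set C := cSum γ I a τ j
  field_simp
  ring

lemma Ffun_tie (γ : ℝ → ℝ) (I : ℕ) (a : ℕ → ℝ) (τ : ℕ → ℝ) (hI : 3 ≤ I) (s : ℝ) :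
    ∀ j' j, j ≤ j' → j' ≤ I - 1 → (∀ p, j < p → p ≤ j' → τ p = s) →
      Ffun γ I a τ j' s = Ffun γ I a τ j s := by
  intro j'
  induction j' with
  | zero =>
    intro j h _ _
    interval_cases j
    rfl
  | succ m ih =>
    intro j hj hle htie
    rcases Nat.eq_or_lt_of_le hj with h | h
    · rw [h]
    · have hjm : j ≤ m := by omega
      rw [Ffun_succ γ I a τ m hle hI s, htie (m + 1) (by omega) le_rfl]
      simp only [sub_self, zero_mul, mul_zero, zero_div, sub_zero]
      exact ih j hjm (by omega) (fun p hp hp' => htie p hp (by omega))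
lemma filter_eq (I : ℕ) (τ : ℕ → ℝ) (hτmono : ∀ j k : ℕ, j ≤ k → k ≤ I → τ j ≤ τ k) (t : ℝ) :
    Finset.filter (fun k => τ k < t) (Finset.Icc 1 I)
      = Finset.Icc 1 (Finset.filter (fun k => τ k < t) (Finset.Icc 1 I)).card := by
  set S := Finset.filter (fun k => τ k < t) (Finset.Icc 1 I) with hSdef
  have hsub : S ⊆ Finset.Icc 1 S.card := by
    intro x hx
    have hx' := Finset.mem_filter.mp hx
    obtain ⟨hx1, hxI⟩ := Finset.mem_Icc.mp hx'.1
    have h1 : Finset.Icc 1 x ⊆ S := by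
      intro j hj
      obtain ⟨hj1, hjx⟩ := Finset.mem_Icc.mp hj
      refine Finset.mem_filter.mpr ⟨Finset.mem_Icc.mpr ⟨hj1, le_trans hjx hxI⟩, ?_⟩
      exact lt_of_le_of_lt (hτmono j x hjx hxI) hx'.2
    have hc := Finset.card_le_card h1
    rw [Nat.card_Icc] at hc
    exact Finset.mem_Icc.mpr ⟨hx1, by omega⟩
  exact Finset.eq_of_subset_of_card_le hsub (by rw [Nat.card_Icc]; omega)
lemma mu_eq (κ γ : ℝ → ℝ) (I : ℕ) (a : ℕ → ℝ) (τ : ℕ → ℝ)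
    (hI : 3 ≤ I) (hτ0 : τ 0 = 0)
    (hτmono : ∀ j k : ℕ, j ≤ k → k ≤ I → τ j ≤ τ k)
    {t : ℝ} (ht0 : 0 ≤ t) (ht1 : t ≤ τ (I - 1)) (m : ℕ)
    (hm2 : m ≤ I - 2) (hmt : ∀ k : ℕ, 1 ≤ k → k ≤ I → (τ k < t ↔ k ≤ m)) :
    muDrift κ γ I a τ t = κ t * Ffun γ I a τ m t := by
  by_cases hlt : t < τ (I - 1)
  · set j := lastIdx I τ t with hj
    have hne : (Finset.filter (fun j => τ j ≤ t) (Finset.range (I - 1))).Nonempty :=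
      ⟨0, Finset.mem_filter.mpr ⟨Finset.mem_range.mpr (by omega), by rw [hτ0]; exact ht0⟩⟩
    obtain ⟨b, hb, hbe⟩ := Finset.exists_mem_eq_sup _ hne id
    have hjb : j = b := hbe
    have hbf := Finset.mem_filter.mp hb
    have hjI2 : j ≤ I - 2 := by
      have := Finset.mem_range.mp hbf.1
      omega
    have hjt : τ j ≤ t := by rw [hjb]; exact hbf.2
    have hmj : m ≤ j := by
      rcases Nat.eq_zero_or_pos m with h0 | h0
      · omega
      · have hmem : m ∈ Finset.filter (fun j => τ j ≤ t) (Finset.range (I - 1)) :=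
          Finset.mem_filter.mpr ⟨Finset.mem_range.mpr (by omega),
            le_of_lt ((hmt m h0 (by omega)).mpr le_rfl)⟩
        exact Finset.le_sup (f := id) hmem
    have htie : ∀ p, m < p → p ≤ j → τ p = t := by
      intro p hp1 hp2
      have h1 : τ p ≤ t := le_trans (hτmono p j hp2 (by omega)) hjt
      have h2 : ¬ τ p < t := fun h => absurd ((hmt p (by omega) (by omega)).mp h) (by omega)
      linarith
    have hF : Ffun γ I a τ j t = Ffun γ I a τ m t :=
      Ffun_tie γ I a τ hI t j m hmj (by omega) htie
    simp only [muDrift, if_pos hlt]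
    rw [← hj, ← hF]
    unfold Ffun cSum
    ring
  · have ht1' : t = τ (I - 1) := le_antisymm ht1 (not_lt.mp hlt)
    have htie : ∀ p, m < p → p ≤ I - 2 → τ p = t := by
      intro p hp1 hp2
      have h1 : τ p ≤ t := ht1' ▸ hτmono p (I - 1) (by omega) (by omega)
      have h2 : ¬ τ p < t := fun h => absurd ((hmt p (by omega) (by omega)).mp h) (by omega)
      linarith
    have hF : Ffun γ I a τ (I - 2) t = Ffun γ I a τ m t :=
      Ffun_tie γ I a τ hI t (I - 2) m (by omega) (by omega) htie
    simp only [muDrift, if_neg hlt]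
    rw [← hF]
    have e1 : I - 2 + 1 = I - 1 := by omega
    have e2 : ((I - 2 : ℕ) : ℝ) = (I : ℝ) - 2 := by
      rw [Nat.cast_sub (by omega : 2 ≤ I)]
      norm_num
    unfold Ffun cSum
    rw [e1, e2]
    have e3 : (I : ℝ) - ((I : ℝ) - 2) = 2 := by ring
    rw [e3]
    ring
lemma mu_at_tau (κ γ : ℝ → ℝ) (I : ℕ) (a : ℕ → ℝ) (τ : ℕ → ℝ)
    (hI : 3 ≤ I) (hτ0 : τ 0 = 0)
    (hτmono : ∀ j k : ℕ, j ≤ k → k ≤ I → τ j ≤ τ k)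
    (hτlast : τ (I - 1) = τ I) (k : ℕ) (hk1 : 1 ≤ k) (hkI : k ≤ I) :
    muDrift κ γ I a τ (τ k) = κ (τ k) * Ffun γ I a τ (k - 1) (τ k) := by
  set s := τ k with hs
  set S := Finset.filter (fun p => τ p < s) (Finset.Icc 1 I) with hSdef
  set m := S.card with hm
  have hSeq : S = Finset.Icc 1 m := filter_eq I τ hτmono s
  have hmem : ∀ p : ℕ, 1 ≤ p → p ≤ I → (τ p < s ↔ p ≤ m) := by
    intro p h1 h2
    constructor
    · intro h
      have hp : p ∈ S := Finset.mem_filter.mpr ⟨Finset.mem_Icc.mpr ⟨h1, h2⟩, h⟩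
      rw [hSeq] at hp
      exact (Finset.mem_Icc.mp hp).2
    · intro h
      have hp : p ∈ S := hSeq ▸ Finset.mem_Icc.mpr ⟨h1, h⟩
      exact (Finset.mem_filter.mp hp).2
  have hτge : ∀ x, I - 1 ≤ x → x ≤ I → τ (I - 1) ≤ τ x := by
    intro x h1 h2
    have : x = I - 1 ∨ x = I := by omega
    rcases this with h | h
    · rw [h]
    · rw [h, ← hτlast]
  have hks : s ≤ τ (I - 1) := by
    by_cases h : k ≤ I - 1
    · exact hτmono k (I - 1) h (by omega)
    · have hk : k = I := by omega
      rw [hs, hk, ← hτlast]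
  have hmk : m ≤ k - 1 := by
    have hsub : S ⊆ Finset.Icc 1 (k - 1) := by
      intro x hx
      obtain ⟨hx1, hx2⟩ := Finset.mem_filter.mp hx
      obtain ⟨h1, h2⟩ := Finset.mem_Icc.mp hx1
      refine Finset.mem_Icc.mpr ⟨h1, ?_⟩
      by_contra hcon
      exact absurd hx2 (not_lt.mpr (hτmono k x (by omega) h2))
    have := Finset.card_le_card hsub
    rw [Nat.card_Icc] at this
    omega
  have hm2 : m ≤ I - 2 := by
    have hsub : S ⊆ Finset.Icc 1 (I - 2) := by
      intro x hx
      obtain ⟨hx1, hx2⟩ := Finset.mem_filter.mp hx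
      obtain ⟨h1, h2⟩ := Finset.mem_Icc.mp hx1
      refine Finset.mem_Icc.mpr ⟨h1, ?_⟩
      by_contra hcon
      have : τ (I - 1) ≤ τ x := hτge x (by omega) h2
      have : s ≤ τ x := le_trans hks this
      linarith
    have := Finset.card_le_card hsub
    rw [Nat.card_Icc] at this
    omega
  have h0s : 0 ≤ s := by
    have := hτmono 0 k (Nat.zero_le k) hkI
    rw [hτ0] at this
    exact this
  have hmu := mu_eq κ γ I a τ hI hτ0 hτmono h0s hks m hm2 hmem
  rw [hmu]
  congr 1
  have htie2 : ∀ p, m < p → p ≤ k - 1 → τ p = s := by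
    intro p hp1 hp2
    have h1 : τ p ≤ s := hτmono p k (by omega) hkI
    have h2 : ¬ τ p < s := fun h => absurd ((hmem p (by omega) (by omega)).mp h) (by omega)
    linarith
  exact (Ffun_tie γ I a τ hI s (k - 1) m hmk (by omega) htie2).symm
lemma key1 (γ : ℝ → ℝ) (I : ℕ) (a : ℕ → ℝ) (τ : ℕ → ℝ) (hI : 3 ≤ I) :
    ∀ m, m ≤ I - 1 →
      ∑ k ∈ Finset.Icc 1 m, (Ffun γ I a τ (k - 1) (τ k) + γ (τ k) * a k)
        = ((I : ℝ) - (m : ℝ)) * cSum γ I a τ m := by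
  intro m
  induction m with
  | zero => simp [cSum]
  | succ p ih =>
    intro hp
    rw [Finset.sum_Icc_succ_top (by omega), ih (by omega), cSum_succ]
    have e0 : p + 1 - 1 = p := rfl
    rw [e0]
    have hA : Acoef I a (p + 1) = a (p + 1) - aSig I a (p + 1) / ((I : ℝ) - (p : ℝ)) := by
      rw [Acoef, if_neg (by omega)]
      have : (I : ℝ) - ((p + 1 : ℕ) : ℝ) + 1 = (I : ℝ) - (p : ℝ) := by push_cast; ring
      rw [this]
    rw [hA]
    have hpR : (p : ℝ) + 1 < (I : ℝ) := by exact_mod_cast (by omega : p + 1 < I)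
    have d1 : (I : ℝ) - (p : ℝ) ≠ 0 := by intro h; linarith
    have d2 : (I : ℝ) - (p : ℝ) - 1 ≠ 0 := by intro h; linarith
    have e1 : ((p + 1 : ℕ) : ℝ) = (p : ℝ) + 1 := by push_cast; ring
    rw [e1]
    unfold Ffun
    set x := (I : ℝ) - (p : ℝ) with hx
    have hx1 : (I : ℝ) - ((p : ℝ) + 1) = x - 1 := by rw [hx]; ring
    rw [hx1]
    set G1 := γ (τ (p + 1))
    set A1 := a (p + 1)
    set S1 := aSig I a (p + 1)
    set C := cSum γ I a τ p
    field_simp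
    ring

lemma key2 (γ : ℝ → ℝ) (I : ℕ) (a : ℕ → ℝ) (τ : ℕ → ℝ) (hI : 3 ≤ I) :
    ∑ k ∈ Finset.Icc 1 I, (Ffun γ I a τ (k - 1) (τ k) + γ (τ k) * a k) = 0 := by
  obtain ⟨n, hn⟩ : ∃ n, I = n + 1 := ⟨I - 1, by omega⟩
  subst hn
  rw [Finset.sum_Icc_succ_top (by omega), key1 γ (n + 1) a τ hI n (by omega)]
  have e0 : n + 1 - 1 = n := rfl
  rw [e0]
  unfold Ffun
  rw [aSig_last]
  push_cast
  have d : ((n : ℝ) + 1) - (n : ℝ) = 1 := by ring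
  rw [d]
  ring

/-- if `Σ_{k=1}^{I} θ(k)_{0−} = n`, then the market clears at every
time: `Σ_{k=1}^{I} θ(k)(t) = n` for all `t ∈ [0,T]`. -/
theorem stmt14 (T : ℝ) (κ γ : ℝ → ℝ) (hT : 0 < T)
    (hκcont : ContinuousOn κ (Set.Icc 0 T))
    (hκpos : ∀ t ∈ Set.Icc (0 : ℝ) T, 0 < κ t)
    (hγcont : ContinuousOn γ (Set.Icc 0 T))
    (hγmono : StrictMonoOn γ (Set.Icc 0 T))
    (hγ0 : γ 0 = 0) (hγT : γ T = 1)
    (I : ℕ) (hI : 3 ≤ I) (a : ℕ → ℝ) (τ : ℕ → ℝ)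
    (hτ0 : τ 0 = 0) (hτmono : ∀ j k : ℕ, j ≤ k → k ≤ I → τ j ≤ τ k)
    (hτlast : τ (I - 1) = τ I) (hτT : τ (I - 1) < T)
    (θ0 : ℕ → ℝ) (n : ℝ) (hθ0 : (∑ k ∈ Finset.Icc 1 I, θ0 k) = n) :
    ∀ t ∈ Set.Icc (0 : ℝ) T, ∑ k ∈ Finset.Icc 1 I, thetaEq κ γ I a τ θ0 k t = n := by
  intro t ht
  obtain ⟨ht0, htT⟩ := ht
  have hτle : ∀ k, k ≤ I → τ k ≤ τ (I - 1) := by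
    intro k hk
    by_cases h : k ≤ I - 1
    · exact hτmono k (I - 1) h (by omega)
    · have hkI : k = I := by omega
      rw [hkI, ← hτlast]
  have hτmem : ∀ k, k ≤ I → 0 ≤ τ k ∧ τ k ≤ T := by
    intro k hk
    have h0 : 0 ≤ τ k := by
      have := hτmono 0 k (Nat.zero_le k) hk
      rwa [hτ0] at this
    exact ⟨h0, le_of_lt (lt_of_le_of_lt (hτle k hk) hτT)⟩
  have hκne : ∀ s, 0 ≤ s → s ≤ T → κ s ≠ 0 := fun s h1 h2 => ne_of_gt (hκpos s ⟨h1, h2⟩)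
  have hfz : ∀ k, 1 ≤ k → k ≤ I → ¬ (t ≤ τ k) →
      thetaEq κ γ I a τ θ0 k t = θ0 k + (Ffun γ I a τ (k - 1) (τ k) + γ (τ k) * a k) := by
    intro k h1 h2 h3
    rw [thetaEq, if_neg h3, mu_at_tau κ γ I a τ hI hτ0 hτmono hτlast k h1 h2,
      mul_div_cancel_left₀ _ (hκne (τ k) (hτmem k h2).1 (hτmem k h2).2)]
    ring
  by_cases hcase : t ≤ τ (I - 1)
  · -- t before the last stop-trade time
    set S := Finset.filter (fun p => τ p < t) (Finset.Icc 1 I) with hSdef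
    set m := S.card with hm
    have hSeq : S = Finset.Icc 1 m := filter_eq I τ hτmono t
    have hmem : ∀ p : ℕ, 1 ≤ p → p ≤ I → (τ p < t ↔ p ≤ m) := by
      intro p h1 h2
      constructor
      · intro h
        have hp : p ∈ S := Finset.mem_filter.mpr ⟨Finset.mem_Icc.mpr ⟨h1, h2⟩, h⟩
        rw [hSeq] at hp
        exact (Finset.mem_Icc.mp hp).2
      · intro h
        have hp : p ∈ S := hSeq ▸ Finset.mem_Icc.mpr ⟨h1, h⟩
        exact (Finset.mem_filter.mp hp).2
    have hm2 : m ≤ I - 2 := by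
      have hsub : S ⊆ Finset.Icc 1 (I - 2) := by
        intro x hx
        obtain ⟨hx1, hx2⟩ := Finset.mem_filter.mp hx
        obtain ⟨h1, h2⟩ := Finset.mem_Icc.mp hx1
        refine Finset.mem_Icc.mpr ⟨h1, ?_⟩
        by_contra hcon
        have hge : τ (I - 1) ≤ τ x := by
          have : x = I - 1 ∨ x = I := by omega
          rcases this with h | h
          · rw [h]
          · rw [h, ← hτlast]
        linarith
      have := Finset.card_le_card hsub
      rw [Nat.card_Icc] at this
      omega
    have hmI : m ≤ I := by omega
    have hmu : muDrift κ γ I a τ t = κ t * Ffun γ I a τ m t :=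
      mu_eq κ γ I a τ hI hτ0 hτmono ht0 hcase m hm2 hmem
    have hSc : Finset.filter (fun p => ¬ τ p < t) (Finset.Icc 1 I) = Finset.Icc (m + 1) I := by
      ext x
      simp only [Finset.mem_filter, Finset.mem_Icc]
      constructor
      · rintro ⟨⟨h1, h2⟩, h3⟩
        exact ⟨by by_contra hc; exact h3 ((hmem x h1 h2).mpr (by omega)), h2⟩
      · rintro ⟨h1, h2⟩
        have hx1 : 1 ≤ x := by omega
        exact ⟨⟨hx1, h2⟩, fun h => by have := (hmem x hx1 h2).mp h; omega⟩
    rw [← Finset.sum_filter_add_sum_filter_not (Finset.Icc 1 I) (fun p => τ p < t)]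
    rw [← hSdef, hSeq, hSc]
    have hs1 : ∑ k ∈ Finset.Icc 1 m, thetaEq κ γ I a τ θ0 k t
        = (∑ k ∈ Finset.Icc 1 m, θ0 k) + ((I : ℝ) - (m : ℝ)) * cSum γ I a τ m := by
      have hcg1 : ∀ k ∈ Finset.Icc 1 m, thetaEq κ γ I a τ θ0 k t
          = θ0 k + (Ffun γ I a τ (k - 1) (τ k) + γ (τ k) * a k) := by
        intro k hk
        obtain ⟨h1, h2⟩ := Finset.mem_Icc.mp hk
        exact hfz k h1 (by omega) (not_le.mpr ((hmem k h1 (by omega)).mpr h2))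
      rw [Finset.sum_congr rfl hcg1, Finset.sum_add_distrib, key1 γ I a τ hI m (by omega)]
    have hs2 : ∑ k ∈ Finset.Icc (m + 1) I, thetaEq κ γ I a τ θ0 k t
        = (∑ k ∈ Finset.Icc (m + 1) I, θ0 k)
          + (((I : ℝ) - (m : ℝ)) * Ffun γ I a τ m t + γ t * aSig I a (m + 1)) := by
      have hcg : ∀ k ∈ Finset.Icc (m + 1) I, thetaEq κ γ I a τ θ0 k t
          = θ0 k + (Ffun γ I a τ m t + γ t * a k) := by
        intro k hk
        obtain ⟨h1, h2⟩ := Finset.mem_Icc.mp hk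
        have hnlt : ¬ τ k < t := fun h => by have := (hmem k (by omega) h2).mp h; omega
        rw [thetaEq, if_pos (not_lt.mp hnlt), hmu,
          mul_div_cancel_left₀ _ (hκne t ht0 htT)]
        ring
      rw [Finset.sum_congr rfl hcg, Finset.sum_add_distrib, Finset.sum_add_distrib,
        Finset.sum_const, ← Finset.mul_sum, Nat.card_Icc, nsmul_eq_mul]
      have hcard : ((I + 1 - (m + 1) : ℕ) : ℝ) = (I : ℝ) - (m : ℝ) := by
        have : I + 1 - (m + 1) = I - m := by omega
        rw [this, Nat.cast_sub hmI]
      rw [hcard, aSig]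
    rw [hs1, hs2]
    have hsplit : (∑ k ∈ Finset.Icc 1 m, θ0 k) + (∑ k ∈ Finset.Icc (m + 1) I, θ0 k) = n := by
      rw [← hθ0, ← Finset.sum_filter_add_sum_filter_not (Finset.Icc 1 I) (fun p => τ p < t) θ0,
        ← hSdef, hSeq, hSc]
    have dm : (I : ℝ) - (m : ℝ) ≠ 0 := by
      have : (m : ℝ) < (I : ℝ) := by exact_mod_cast (by omega : m < I)
      intro h; linarith
    have hexp : ((I : ℝ) - (m : ℝ)) * Ffun γ I a τ m t
        = -(γ t * aSig I a (m + 1)) - ((I : ℝ) - (m : ℝ)) * cSum γ I a τ m := by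
      unfold Ffun
      field_simp
      ring
    rw [hexp]
    linarith
  · -- after the last stop-trade time: everyone frozen
    have hcg : ∀ k ∈ Finset.Icc 1 I, thetaEq κ γ I a τ θ0 k t
        = θ0 k + (Ffun γ I a τ (k - 1) (τ k) + γ (τ k) * a k) := by
      intro k hk
      obtain ⟨h1, h2⟩ := Finset.mem_Icc.mp hk
      refine hfz k h1 h2 ?_
      have := hτle k h2
      push_neg at hcase
      intro h; linarith
    rw [Finset.sum_congr rfl hcg, Finset.sum_add_distrib, key2 γ I a τ hI, hθ0]
    ring
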